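/- For an ensemble (p, ρ) on a finite alphabet Γ with ρ_out positive definite, the Petz recovery map of the preparation channel equals the map that records the PGM Bayesian posterior on the diagonal: for every d×d complex matrix Y, D^{1/2} · A†(ρ_out^{-1/2} Y ρ_out^{-1/2}) · D^{1/2} = Σ_{a ∈ Γ} Tr(E_a Y) · |a⟩⟨a|, where D = diag(p) is the Γ×Γ diagonal matrix with entries p_a, A†(M) = Σ_a Tr(ρ_a M) |a⟩⟨a| is the Hilbert–Schmidt adjoint of the preparation channel, and |a⟩⟨a| is the Γ×Γ matrix unit at (a,a). In particular, applied to Y = ρ_x the output is the diagonal matrix of Bayesian posterior probabilities p(a|x) = Tr(E_a ρ_x). -/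

import Mathlib

open Matrix
open scoped ComplexOrder

/-- The positive semidefinite square root of a positive semidefinite matrix
(the Mathlib definition of December 2024, since removed from Mathlib). -/
noncomputable def Matrix.PosSemidef.sqrt {n 𝕜 : Type*} [Fintype n] [RCLike 𝕜] [DecidableEq n]
    {A : Matrix n n 𝕜} (hA : A.PosSemidef) : Matrix n n 𝕜 :=
  hA.1.eigenvectorUnitary.1 * diagonal ((↑) ∘ (√·) ∘ hA.1.eigenvalues) *
  (star hA.1.eigenvectorUnitary : Matrix n n 𝕜)

/-- The `x`-th element `E_x = ρ_out^{-1/2} (p_x ρ_x) ρ_out^{-1/2}` of the pretty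
good measurement associated with the ensemble `(p, ρ)`, where
`ρ_out = ∑ₐ pₐ ρₐ` and `ρ_out^{-1/2}` is the inverse of the positive
semidefinite square root of `ρ_out`. -/
noncomputable def pgm {n : ℕ} {Γ : Type*} [Fintype Γ]
    (p : Γ → ℝ) (ρ : Γ → Matrix (Fin n) (Fin n) ℂ)
    (hout : (∑ a, (p a : ℂ) • ρ a).PosSemidef) (x : Γ) :
    Matrix (Fin n) (Fin n) ℂ :=
  hout.sqrt⁻¹ * ((p x : ℂ) • ρ x) * hout.sqrt⁻¹

/-- The Petz recovery map of the preparation channel `A(X) = ∑ₐ Xₐₐ ρₐ` with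
respect to the input state `D = diag(p)` equals the map recording the PGM
Bayesian posterior on the diagonal: for every `d × d` matrix `Y`,
`D^{1/2} A†(ρ_out^{-1/2} Y ρ_out^{-1/2}) D^{1/2} = ∑ₐ Tr(Eₐ Y) |a⟩⟨a|`,
where `A†(M) = ∑ₐ Tr(ρₐ M) |a⟩⟨a|`. In particular, applied to `Y = ρ_x` the
output is the diagonal matrix of posterior probabilities `p(a|x) = Tr(Eₐ ρ_x)`. -/
theorem petz_recovery_eq_pgm_posterior {n : ℕ} {Γ : Type*} [Fintype Γ]
    [DecidableEq Γ]
    (p : Γ → ℝ) (hp : ∀ a, 0 < p a) (hsum : ∑ a, p a = 1)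
    (ρ : Γ → Matrix (Fin n) (Fin n) ℂ)
    (hρ : ∀ a, (ρ a).PosSemidef) (htr : ∀ a, (ρ a).trace = 1)
    (hpd : (∑ a, (p a : ℂ) • ρ a).PosDef)
    (Y : Matrix (Fin n) (Fin n) ℂ) :
    (Matrix.diagonal fun a => (Real.sqrt (p a) : ℂ)) *
        (∑ a, (ρ a *
              (hpd.posSemidef.sqrt⁻¹ * Y * hpd.posSemidef.sqrt⁻¹)).trace •
            Matrix.single a a (1 : ℂ)) *
        (Matrix.diagonal fun a => (Real.sqrt (p a) : ℂ))
      = ∑ a, (pgm p ρ hpd.posSemidef a * Y).trace •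
          Matrix.single a a (1 : ℂ) := by
  set S := hpd.posSemidef.sqrt⁻¹
  rw [Matrix.mul_sum, Matrix.sum_mul]
  refine Finset.sum_congr rfl fun a _ => ?_
  have h1 : Matrix.single a a (1:ℂ) = Matrix.diagonal (Pi.single a 1) := by
    ext i j
    simp only [Matrix.single, Matrix.diagonal_apply, Pi.single_apply, Matrix.of_apply]
    by_cases hi : i = j <;> by_cases ha : a = i <;> simp_all [eq_comm]
  have hdiag : (Matrix.diagonal fun a => (Real.sqrt (p a) : ℂ)) *
      Matrix.single a a (1 : ℂ) *
      (Matrix.diagonal fun a => (Real.sqrt (p a) : ℂ))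
      = (p a : ℂ) • Matrix.single a a (1 : ℂ) := by
    rw [h1, Matrix.diagonal_mul_diagonal, Matrix.diagonal_mul_diagonal]
    have hf : (fun i => (Real.sqrt (p i) : ℂ) * (Pi.single a 1 : Γ → ℂ) i * Real.sqrt (p i))
        = (p a : ℂ) • (Pi.single a 1 : Γ → ℂ) := by
      funext b
      rcases eq_or_ne b a with rfl | hb
      · simp [← Complex.ofReal_mul, Real.mul_self_sqrt (hp b).le]
      · simp [Pi.single_apply, hb]
    rw [hf, Matrix.diagonal_smul]
  have htrace : (pgm p ρ hpd.posSemidef a * Y).trace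
      = (p a : ℂ) * (ρ a * (S * Y * S)).trace := by
    unfold pgm
    rw [show hpd.posSemidef.sqrt⁻¹ * ((p a : ℂ) • ρ a) * hpd.posSemidef.sqrt⁻¹ * Y
        = (p a : ℂ) • (S * ρ a * (S * Y)) by
      simp only [S, Matrix.mul_smul, Matrix.smul_mul, Matrix.mul_assoc]]
    rw [Matrix.trace_smul, smul_eq_mul]
    congr 1
    rw [Matrix.mul_assoc, Matrix.trace_mul_comm]
    simp only [Matrix.mul_assoc]
  rw [Matrix.mul_smul, Matrix.smul_mul, hdiag, htrace, smul_smul, mul_comm]
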